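/- arXiv:1809.00869 — 3 statements merged into one kernel-verified Lean document; each statement's English description precedes it below -/
import Mathlib

section
/- The map q(z,w) = [[w̄, -z̄w̄],[-z̄w̄, z̄²w̄]] (a complex bilinear form on ℝ² given by this symmetric matrix) satisfies the SL(2,ℝ)-equivariance: for Ψ ∈ SL(2,ℝ) acting by Ψ·(z,w) = ((az+b)/(cz+d), (cz+d)²w), one has q(Ψ(z,w))(v₁,v₂) = q(z,w)(Ψ⁻¹v₁, Ψ⁻¹v₂) for all v₁, v₂ ∈ ℝ². -/
open Complex Matrix

/-- The symmetric complex bilinear form on `ℝ²` with matrix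
`[[w̄, -z̄w̄],[-z̄w̄, z̄²w̄]]`, evaluated on the pair `(v₁, v₂)`. -/
noncomputable def qform (z w : ℂ) (v₁ v₂ : Fin 2 → ℝ) : ℂ :=
  (starRingEnd ℂ) w * (v₁ 0 : ℂ) * (v₂ 0 : ℂ)
    + (-(starRingEnd ℂ) z * (starRingEnd ℂ) w) *
        ((v₁ 0 : ℂ) * (v₂ 1 : ℂ) + (v₁ 1 : ℂ) * (v₂ 0 : ℂ))
    + ((starRingEnd ℂ) z) ^ 2 * (starRingEnd ℂ) w * (v₁ 1 : ℂ) * (v₂ 1 : ℂ)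

/-- `SL(2,ℝ)`-equivariance of `q`: for `Ψ = [[a,b],[c,d]]` with determinant one acting by
`Ψ·(z,w) = ((az+b)/(cz+d), (cz+d)²·w)`, one has
`q(Ψ(z,w))(v₁,v₂) = q(z,w)(Ψ⁻¹v₁, Ψ⁻¹v₂)`. -/
theorem stmt_7 (a b c d : ℝ) (h : a * d - b * c = 1) (z w : ℂ) (hz : 0 < z.im)
    (v₁ v₂ : Fin 2 → ℝ) :
    qform (((a : ℂ) * z + (b : ℂ)) / ((c : ℂ) * z + (d : ℂ)))
        (((c : ℂ) * z + (d : ℂ)) ^ 2 * w) v₁ v₂ =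
      qform z w ((!![a, b; c, d])⁻¹.mulVec v₁) ((!![a, b; c, d])⁻¹.mulVec v₂) := by
  have hs : (c : ℂ) * z + (d : ℂ) ≠ 0 := by
    intro hzero
    rcases eq_or_ne c 0 with hc | hc
    · have hd : (d : ℝ) ≠ 0 := by
        intro hd; rw [hc, hd] at h; simp at h
      rw [hc] at hzero
      simp at hzero
      exact hd hzero
    · have : ((c : ℂ) * z + (d : ℂ)).im = c * z.im := by simp
      rw [hzero] at this
      simp at this
      rcases this with h1 | h1
      · exact hc h1
      · exact hz.ne' h1
  have hsc : (c : ℂ) * (starRingEnd ℂ) z + (d : ℂ) ≠ 0 := by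
    intro H
    apply hs
    have := congrArg (starRingEnd ℂ) H
    simpa using this
  have hinv : (!![a, b; c, d])⁻¹ = !![d, -b; -c, a] := by
    rw [Matrix.inv_def, Matrix.adjugate_fin_two_of, Matrix.det_fin_two_of, h]
    simp
  rw [hinv]
  simp only [qform, Matrix.mulVec, dotProduct, Matrix.of_apply, Fin.sum_univ_two,
    Matrix.cons_val', Matrix.cons_val_zero, Matrix.cons_val_one, Matrix.head_cons,
    Matrix.empty_val', Matrix.cons_val_fin_one, Matrix.head_fin_const,
    _root_.map_mul, map_add, map_div₀, map_pow, Complex.conj_ofReal,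
    Complex.ofReal_add, Complex.ofReal_mul, Complex.ofReal_neg]
  field_simp
  ring
end

section
/- For every z ∈ H and w ∈ ℂ, the bilinear form q(z,w) with matrix [[w̄, -z̄w̄],[-z̄w̄, z̄²w̄]] is complex bilinear with respect to the complex structure j(z): q(z,w)(j(z)v₁, v₂) = i·q(z,w)(v₁, v₂) for all v₁, v₂ ∈ ℝ². -/
open Complex Matrix

/-- The map `j` from the upper half plane to 2×2 real matrices. -/
noncomputable def jmap (z : ℂ) : Matrix (Fin 2) (Fin 2) ℝ :=
  !![z.re / z.im, -(z.re ^ 2 + z.im ^ 2) / z.im; 1 / z.im, -z.re / z.im]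

/-- The form `q(z,w)` is complex bilinear with respect to `j(z)`:
`q(z,w)(j(z)v₁, v₂) = i·q(z,w)(v₁,v₂)`. -/
theorem stmt_8 (z w : ℂ) (hz : 0 < z.im) (v₁ v₂ : Fin 2 → ℝ) :
    qform z w ((jmap z).mulVec v₁) v₂ = Complex.I * qform z w v₁ v₂ := by
  have him : (z.im : ℂ) ≠ 0 := by exact_mod_cast hz.ne'
  have hzc : (starRingEnd ℂ) z = (z.re : ℂ) - z.im * Complex.I := by
    simp [Complex.ext_iff, Complex.conj_re, Complex.conj_im]
  simp only [qform, jmap, mulVec, dotProduct, Fin.sum_univ_two,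
    Matrix.cons_val', Matrix.cons_val_zero, Matrix.cons_val_one, Matrix.head_cons,
    Matrix.empty_val', Matrix.cons_val_fin_one, Matrix.head_fin_const, Matrix.of_apply, hzc]
  push_cast
  field_simp
  ring_nf
  simp only [Complex.I_sq, show Complex.I ^ 3 = -Complex.I by
    rw [pow_succ, Complex.I_sq]; ring]
  ring
end

section
/- Let (M, g, I₁, I₂, I₃) be a hyperkähler manifold, G a Lie group acting freely on M by hyperkähler isometries with hyperkähler moment map μ = (μ₁, μ₂, μ₃) : M → ℝ³ ⊗ g*. Then 0 is a regular value of μ: at every x with μ(x) = 0 the differential dμ(x) : T_xM → ℝ³ ⊗ g* is surjective. -/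
open RealInnerProductSpace

lemma solve_aux {V G : Type*}
    [NormedAddCommGroup V] [InnerProductSpace ℝ V] [FiniteDimensional ℝ V]
    [NormedAddCommGroup G] [InnerProductSpace ℝ G] [FiniteDimensional ℝ G]
    (L : G →ₗ[ℝ] V) (hL : Function.Injective L) (η : G →ₗ[ℝ] ℝ) :
    ∃ a : G, ∀ ξ : G, ⟪L a, L ξ⟫ = η ξ := by
  set T : G →ₗ[ℝ] G := (LinearMap.adjoint L).comp L with hT
  have hTip : ∀ a ξ : G, ⟪T a, ξ⟫ = ⟪L a, L ξ⟫ := by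
    intro a ξ
    simp [hT, LinearMap.adjoint_inner_left]
  have hTinj : Function.Injective T := by
    rw [← LinearMap.ker_eq_bot, LinearMap.ker_eq_bot']
    intro a ha
    have : ⟪L a, L a⟫ = 0 := by rw [← hTip, ha, inner_zero_left]
    have : L a = 0 := inner_self_eq_zero.mp this
    have : L a = L 0 := by simpa using this
    exact hL this
  have hTsurj : Function.Surjective T :=
    (LinearMap.injective_iff_surjective).mp hTinj
  set g : G := (InnerProductSpace.toDual ℝ G).symm (LinearMap.toContinuousLinearMap η)
  obtain ⟨a, ha⟩ := hTsurj g
  refine ⟨a, fun ξ => ?_⟩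
  rw [← hTip, ha]
  have := InnerProductSpace.toDual_symm_apply (𝕜 := ℝ) (E := G)
    (y := LinearMap.toContinuousLinearMap η) (x := ξ)
  rw [this]
  rfl

/-- Pointwise (linearized) version of the statement that `0` is a regular value of a
hyperkähler moment map. `V` plays the role of the tangent space `T_xM` at a point `x` of
the zero set, `G` the Lie algebra of the group; `I₁, I₂, I₃` are the three complex
structures (orthogonal, squaring to `-1`, satisfying the quaternion relations);
`L : G → V` is the (injective, since the action is free) infinitesimal action; the
hypothesis `horth` encodes equivariance of the moment map together with `μ(x) = 0`
(namely `ωᵢ(Lξ, Lη) = ⟨μᵢ(x), [η,ξ]⟩ = 0`). The conclusion is surjectivity of the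
differential `dμ(x) : T_xM → ℝ³ ⊗ g*`, `v ↦ (ξ ↦ ⟨Iᵢ(Lξ), v⟩)ᵢ`. -/
theorem stmt_12 {V G : Type*}
    [NormedAddCommGroup V] [InnerProductSpace ℝ V] [FiniteDimensional ℝ V]
    [NormedAddCommGroup G] [InnerProductSpace ℝ G] [FiniteDimensional ℝ G]
    (I₁ I₂ I₃ : V →ₗ[ℝ] V)
    (hiso₁ : ∀ v w : V, ⟪I₁ v, I₁ w⟫ = ⟪v, w⟫)
    (hiso₂ : ∀ v w : V, ⟪I₂ v, I₂ w⟫ = ⟪v, w⟫)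
    (hiso₃ : ∀ v w : V, ⟪I₃ v, I₃ w⟫ = ⟪v, w⟫)
    (hsq₁ : ∀ v : V, I₁ (I₁ v) = -v)
    (hsq₂ : ∀ v : V, I₂ (I₂ v) = -v)
    (hsq₃ : ∀ v : V, I₃ (I₃ v) = -v)
    (hq₁ : ∀ v : V, I₁ (I₂ v) = I₃ v)
    (hq₂ : ∀ v : V, I₂ (I₃ v) = I₁ v)
    (hq₃ : ∀ v : V, I₃ (I₁ v) = I₂ v)
    (L : G →ₗ[ℝ] V) (hL : Function.Injective L)
    (horth : ∀ ξ η : G,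
      ⟪I₁ (L ξ), L η⟫ = 0 ∧ ⟪I₂ (L ξ), L η⟫ = 0 ∧ ⟪I₃ (L ξ), L η⟫ = 0) :
    ∀ η₁ η₂ η₃ : G →ₗ[ℝ] ℝ, ∃ v : V, ∀ ξ : G,
      ⟪I₁ (L ξ), v⟫ = η₁ ξ ∧ ⟪I₂ (L ξ), v⟫ = η₂ ξ ∧ ⟪I₃ (L ξ), v⟫ = η₃ ξ := by
  intro η₁ η₂ η₃
  obtain ⟨a₁, ha₁⟩ := solve_aux L hL η₁
  obtain ⟨a₂, ha₂⟩ := solve_aux L hL η₂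
  obtain ⟨a₃, ha₃⟩ := solve_aux L hL η₃
  -- skew-adjointness of each complex structure
  have key : ∀ (A : V →ₗ[ℝ] V), (∀ v w : V, ⟪A v, A w⟫ = ⟪v, w⟫) →
      (∀ v : V, A (A v) = -v) → ∀ w u : V, ⟪A w, u⟫ = -⟪w, A u⟫ := by
    intro A hiso hsq w u
    calc ⟪A w, u⟫ = ⟪A (A w), A u⟫ := (hiso _ _).symm
      _ = ⟪-w, A u⟫ := by rw [hsq]
      _ = -⟪w, A u⟫ := by rw [inner_neg_left]
  -- remaining quaternion products
  have hI₁I₃ : ∀ v : V, I₁ (I₃ v) = -I₂ v := fun v => by rw [← hq₁, hsq₁]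
  have hI₂I₁ : ∀ v : V, I₂ (I₁ v) = -I₃ v := fun v => by rw [← hq₂, hsq₂]
  have hI₃I₂ : ∀ v : V, I₃ (I₂ v) = -I₁ v := fun v => by rw [← hq₃, hsq₃]
  refine ⟨I₁ (L a₁) + I₂ (L a₂) + I₃ (L a₃), fun ξ => ?_⟩
  have e11 : ⟪I₁ (L ξ), I₁ (L a₁)⟫ = η₁ ξ := by
    rw [hiso₁, real_inner_comm]; exact ha₁ ξ
  have e22 : ⟪I₂ (L ξ), I₂ (L a₂)⟫ = η₂ ξ := by
    rw [hiso₂, real_inner_comm]; exact ha₂ ξ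
  have e33 : ⟪I₃ (L ξ), I₃ (L a₃)⟫ = η₃ ξ := by
    rw [hiso₃, real_inner_comm]; exact ha₃ ξ
  have e12 : ⟪I₁ (L ξ), I₂ (L a₂)⟫ = 0 := by
    rw [key I₁ hiso₁ hsq₁, hq₁, real_inner_comm, (horth a₂ ξ).2.2, neg_zero]
  have e13 : ⟪I₁ (L ξ), I₃ (L a₃)⟫ = 0 := by
    rw [key I₁ hiso₁ hsq₁, hI₁I₃, inner_neg_right, neg_neg, real_inner_comm,
      (horth a₃ ξ).2.1]
  have e21 : ⟪I₂ (L ξ), I₁ (L a₁)⟫ = 0 := by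
    rw [key I₂ hiso₂ hsq₂, hI₂I₁, inner_neg_right, neg_neg, real_inner_comm,
      (horth a₁ ξ).2.2]
  have e23 : ⟪I₂ (L ξ), I₃ (L a₃)⟫ = 0 := by
    rw [key I₂ hiso₂ hsq₂, hq₂, real_inner_comm, (horth a₃ ξ).1, neg_zero]
  have e31 : ⟪I₃ (L ξ), I₁ (L a₁)⟫ = 0 := by
    rw [key I₃ hiso₃ hsq₃, hq₃, real_inner_comm, (horth a₁ ξ).2.1, neg_zero]
  have e32 : ⟪I₃ (L ξ), I₂ (L a₂)⟫ = 0 := by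
    rw [key I₃ hiso₃ hsq₃, hI₃I₂, inner_neg_right, neg_neg, real_inner_comm,
      (horth a₂ ξ).1]
  refine ⟨?_, ?_, ?_⟩ <;>
    simp [inner_add_right, e11, e12, e13, e21, e22, e23, e31, e32, e33]
end
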